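/- arXiv:1603.02562 — 3 statements merged into one kernel-verified Lean document; each statement's English description precedes it below -/
import Mathlib

section
/- If q ≥ 3, then the metric dimension of the non-zero component graph Γ(V) equals Σ_{k=1}^{n} C(n,k)((q−1)^k − 1), where C(n,k) is the binomial coefficient. -/
/-- `W` is a resolving set of `G`: distinct vertices have distinct distance vectors to `W`. -/
def Resolves {α : Type*} (G : SimpleGraph α) (W : Set α) : Prop :=
  ∀ u v : α, (∀ w ∈ W, G.dist u w = G.dist v w) → u = v

/-- The metric dimension of `G`: minimum cardinality of a resolving set. -/
noncomputable def metricDim {α : Type*} (G : SimpleGraph α) : ℕ :=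
  sInf {k | ∃ W : Set α, W.ncard = k ∧ Resolves G W}

/-- A minimal resolving set: no proper subset resolves. -/
def MinimalResolves {α : Type*} (G : SimpleGraph α) (W : Set α) : Prop :=
  Resolves G W ∧ ∀ W' ⊂ W, ¬ Resolves G W'

/-- The exchange property for minimal resolving sets. -/
def ExchangeProperty {α : Type*} (G : SimpleGraph α) : Prop :=
  ∀ W₁ W₂ : Set α, MinimalResolves G W₁ → MinimalResolves G W₂ →
    ∀ r ∈ W₁, ∃ s ∈ W₂, MinimalResolves G (insert r (W₂ \ {s}))

/-- `u` and `v` are twins: equal open neighborhoods or equal closed neighborhoods. -/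
def Twins {α : Type*} (G : SimpleGraph α) (u v : α) : Prop :=
  G.neighborSet u = G.neighborSet v ∨
    insert u (G.neighborSet u) = insert v (G.neighborSet v)

/-- The non-zero component graph of `Fin n → F` with respect to the standard basis:
vertices are the non-zero vectors, adjacency means the supports (skeletons) intersect. -/
def NZCGraph (F : Type*) [Field F] (n : ℕ) :
    SimpleGraph {v : Fin n → F // v ≠ 0} where
  Adj u v := u ≠ v ∧ ∃ i, (u : Fin n → F) i ≠ 0 ∧ (v : Fin n → F) i ≠ 0
  symm := ⟨by
    rintro u v ⟨h, i, hu, hv⟩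
    exact ⟨h.symm, i, hv, hu⟩⟩
  loopless := ⟨by rintro u ⟨h, _⟩; exact h rfl⟩

section Aux

set_option linter.unusedSectionVars false

variable {F : Type*} [Field F] [Fintype F] {n : ℕ}

local notation "V" => {v : Fin n → F // v ≠ 0}

lemma NZC_dist_two {u v : V} (hne : u ≠ v) (hna : ¬ (NZCGraph F n).Adj u v) :
    (NZCGraph F n).dist u v = 2 := by
  obtain ⟨i, hi⟩ : ∃ i, u.1 i ≠ 0 := by
    by_contra h; push_neg at h; exact u.2 (funext h)
  obtain ⟨j, hj⟩ : ∃ j, v.1 j ≠ 0 := by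
    by_contra h; push_neg at h; exact v.2 (funext h)
  set w : V := ⟨fun _ => 1, by
    intro h; exact one_ne_zero (congrFun h i)⟩ with hw
  have hwu : u ≠ w := by
    intro h
    exact hna ⟨hne, j, by rw [h]; exact one_ne_zero, hj⟩
  have hwv : v ≠ w := by
    intro h
    exact hna ⟨hne, i, hi, by rw [h]; exact one_ne_zero⟩
  have a1 : (NZCGraph F n).Adj u w := ⟨hwu, i, hi, one_ne_zero⟩
  have a2 : (NZCGraph F n).Adj w v := ⟨fun h => hwv h.symm, j, one_ne_zero, hj⟩
  have hle : (NZCGraph F n).dist u v ≤ 2 :=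
    SimpleGraph.dist_le (SimpleGraph.Walk.cons a1 (SimpleGraph.Walk.cons a2 SimpleGraph.Walk.nil))
  have h0 : (NZCGraph F n).dist u v ≠ 0 := by
    intro h
    rcases SimpleGraph.dist_eq_zero_iff_eq_or_not_reachable.mp h with h | h
    · exact hne h
    · exact h ⟨SimpleGraph.Walk.cons a1 (SimpleGraph.Walk.cons a2 SimpleGraph.Walk.nil)⟩
  have h1 : (NZCGraph F n).dist u v ≠ 1 := fun h =>
    hna (SimpleGraph.dist_eq_one_iff_adj.mp h)
  omega

lemma NZC_dist_pos {u v : V} (hne : u ≠ v) : 0 < (NZCGraph F n).dist u v := by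
  by_cases ha : (NZCGraph F n).Adj u v
  · rw [SimpleGraph.dist_eq_one_iff_adj.mpr ha]; norm_num
  · rw [NZC_dist_two hne ha]; norm_num

/-- Two vertices outside a resolving set have distinct supports. -/
lemma supp_injOn {W : Set V} (hW : Resolves (NZCGraph F n) W) :
    Set.InjOn (fun x : V => Function.support x.1) Wᶜ := by
  intro x hx y hy hxy
  simp only [funext_iff, Function.support, Set.ext_iff, Set.mem_setOf_eq] at hxy
  apply hW
  intro w hw
  have hwx : w ≠ x := fun h => hx (h ▸ hw)
  have hwy : w ≠ y := fun h => hy (h ▸ hw)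
  by_cases hxy' : x = y
  · rw [hxy']
  by_cases ha : (NZCGraph F n).Adj x w
  · have ha' : (NZCGraph F n).Adj y w := by
      obtain ⟨_, i, hxi, hwi⟩ := ha
      exact ⟨fun h => hwy h.symm, i, (hxy i).mp hxi, hwi⟩
    rw [SimpleGraph.dist_eq_one_iff_adj.mpr ha, SimpleGraph.dist_eq_one_iff_adj.mpr ha']
  · have ha' : ¬ (NZCGraph F n).Adj y w := by
      rintro ⟨_, i, hyi, hwi⟩
      exact ha ⟨fun h => hwx h.symm, i, (hxy i).mpr hyi, hwi⟩
    rw [NZC_dist_two (fun h => hwx h.symm) ha, NZC_dist_two (fun h => hwy h.symm) ha']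

lemma card_V (q : ℕ) (hq : Fintype.card F = q) :
    Nat.card V = q ^ n - 1 := by
  classical
  rw [Nat.card_eq_fintype_card]
  have h1 : Fintype.card {v : Fin n → F // v = 0} = 1 := Fintype.card_subtype_eq (0 : Fin n → F)
  have h : Fintype.card {v : Fin n → F // ¬ v = 0}
      = Fintype.card (Fin n → F) - Fintype.card {v : Fin n → F // v = 0} :=
    Fintype.card_subtype_compl _
  have he : Fintype.card {v : Fin n → F // v ≠ 0} = Fintype.card {v : Fin n → F // ¬ v = 0} :=
    Fintype.card_congr (Equiv.refl _)
  rw [he, h, h1, Fintype.card_fun, Fintype.card_fin, hq]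

lemma card_ne_empty_sets : {S : Set (Fin n) | S ≠ ∅}.ncard = 2 ^ n - 1 := by
  have h1 : ({∅} : Set (Set (Fin n))).ncard + ({∅} : Set (Set (Fin n)))ᶜ.ncard
      = Nat.card (Set (Fin n)) := Set.ncard_add_ncard_compl _
  have h2 : Nat.card (Set (Fin n)) = 2 ^ n := by
    rw [Nat.card_eq_fintype_card, Fintype.card_set, Fintype.card_fin]
  have h3 : ({∅} : Set (Set (Fin n))).ncard = 1 := Set.ncard_singleton _
  have h4 : {S : Set (Fin n) | S ≠ ∅} = ({∅} : Set (Set (Fin n)))ᶜ := by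
    ext S; simp
  rw [h4]
  omega

/-- Lower bound: every resolving set has at least `q^n - 2^n` elements. -/
lemma lower_bound (q : ℕ) (hq : Fintype.card F = q) (h3 : 3 ≤ q)
    {W : Set V} (hW : Resolves (NZCGraph F n) W) :
    q ^ n - 2 ^ n ≤ W.ncard := by
  have hcompl : Wᶜ.ncard ≤ 2 ^ n - 1 := by
    have him : (fun x : V => Function.support x.1) '' Wᶜ ⊆ {S : Set (Fin n) | S ≠ ∅} := by
      rintro S ⟨x, _, rfl⟩
      simp only [Set.mem_setOf_eq]
      intro h
      apply x.2
      funext i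
      have := Set.eq_empty_iff_forall_notMem.mp h i
      simpa [Function.support] using this
    calc Wᶜ.ncard = ((fun x : V => Function.support x.1) '' Wᶜ).ncard :=
          (Set.ncard_image_of_injOn (supp_injOn hW)).symm
      _ ≤ {S : Set (Fin n) | S ≠ ∅}.ncard := Set.ncard_le_ncard him (Set.toFinite _)
      _ = 2 ^ n - 1 := card_ne_empty_sets
  have hsum : W.ncard + Wᶜ.ncard = Nat.card V := Set.ncard_add_ncard_compl _
  rw [card_V q hq] at hsum
  have h2n : 1 ≤ 2 ^ n := Nat.one_le_two_pow
  have hqn : 2 ^ n ≤ q ^ n := Nat.pow_le_pow_left (by omega) n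
  omega

/-- The canonical resolving set: vectors with some coordinate outside {0,1}. -/
def W0 (F : Type*) [Field F] (n : ℕ) : Set {v : Fin n → F // v ≠ 0} :=
  {v | ∃ i, v.1 i ≠ 0 ∧ v.1 i ≠ 1}

/-- there is a field element other than 0 and 1 -/
lemma exists_third (h3 : 3 ≤ Fintype.card F) : ∃ c : F, c ≠ 0 ∧ c ≠ 1 := by
  classical
  by_contra h
  push_neg at h
  have hsub : (Finset.univ : Finset F) ⊆ {0, 1} := by
    intro c _
    rcases eq_or_ne c 0 with h0 | h0
    · simp [h0]
    · simp [h c h0]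
  have := Finset.card_le_card hsub
  have hc2 : ({0, 1} : Finset F).card ≤ 2 := Finset.card_insert_le _ _ |>.trans (by simp)
  rw [Finset.card_univ] at this
  omega

lemma W0_resolves (h3 : 3 ≤ Fintype.card F) : Resolves (NZCGraph F n) (W0 F n) := by
  intro u v h
  by_contra hne
  have key : ∀ x y : V, x ≠ y → (∀ w ∈ W0 F n, (NZCGraph F n).dist x w = (NZCGraph F n).dist y w) →
      x ∉ W0 F n := by
    intro x y hxy hd hx
    have h1 := hd x hx
    rw [SimpleGraph.dist_self] at h1
    have h2 := NZC_dist_pos (Ne.symm hxy)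
    omega
  have hu : u ∉ W0 F n := key u v hne h
  have hv : v ∉ W0 F n := key v u (Ne.symm hne) (fun w hw => (h w hw).symm)
  -- u and v are 0/1 vectors
  simp only [W0, Set.mem_setOf_eq, not_exists, not_and, not_not] at hu hv
  -- their supports differ
  have hsupp : ∃ i, (u.1 i ≠ 0 ∧ v.1 i = 0) ∨ (u.1 i = 0 ∧ v.1 i ≠ 0) := by
    by_contra hc
    push_neg at hc
    apply hne
    apply Subtype.ext
    funext i
    obtain ⟨h1, h2⟩ := hc i
    rcases eq_or_ne (u.1 i) 0 with h0 | h0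
    · rw [h0, h2 h0]
    · rw [hu i h0, hv i (h1 h0)]
  obtain ⟨c, hc0, hc1⟩ := exists_third h3
  obtain ⟨i, hi⟩ := hsupp
  -- the witness vector c·eᵢ
  classical
  set w : V := ⟨fun k => if k = i then c else 0, by
    intro hz
    have := congrFun hz i
    simp at this
    exact hc0 this⟩ with hwdef
  have hwW : w ∈ W0 F n := ⟨i, by simp [hwdef, hc0, hc1]⟩
  have hkey : ∀ x y : V, x.1 i = 1 → y.1 i = 0 →
      (NZCGraph F n).dist x w = 1 ∧ (NZCGraph F n).dist y w = 2 := by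
    intro x y hx0 hy0
    have hxw : x ≠ w := by
      intro hxw
      rw [hxw] at hx0
      simp [hwdef] at hx0
      exact hc1 hx0
    constructor
    · apply SimpleGraph.dist_eq_one_iff_adj.mpr
      exact ⟨hxw, i, by rw [hx0]; exact one_ne_zero, by simp [hwdef, hc0]⟩
    · have hyw : y ≠ w := by
        intro hyw
        rw [hyw] at hy0
        simp [hwdef] at hy0
        exact hc0 hy0
      apply NZC_dist_two hyw
      rintro ⟨_, j, hyj, hwj⟩
      have : j = i := by
        by_contra hji
        simp [hwdef, hji] at hwj
      rw [this] at hyj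
      exact hyj hy0
  have hd := h w hwW
  rcases hi with ⟨h1, h2⟩ | ⟨h1, h2⟩
  · obtain ⟨e1, e2⟩ := hkey u v (hu i h1) h2
    rw [e1, e2] at hd
    exact absurd hd (by norm_num)
  · obtain ⟨e1, e2⟩ := hkey v u (hv i h2) h1
    rw [e1, e2] at hd
    exact absurd hd.symm (by norm_num)

lemma card_W0 (q : ℕ) (hq : Fintype.card F = q) (h3 : 3 ≤ q) :
    (W0 F n).ncard = q ^ n - 2 ^ n := by
  classical
  have h3F : 3 ≤ Fintype.card F := hq ▸ h3
  have him : (fun x : V => Function.support x.1) '' (W0 F n)ᶜ = {S : Set (Fin n) | S ≠ ∅} := by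
    ext S
    constructor
    · rintro ⟨x, _, rfl⟩
      simp only [Set.mem_setOf_eq]
      intro h
      apply x.2
      funext i
      have := Set.eq_empty_iff_forall_notMem.mp h i
      simpa [Function.support] using this
    · intro hS
      obtain ⟨i0, hi0⟩ := Set.nonempty_iff_ne_empty.mpr hS
      refine ⟨⟨fun i => if i ∈ S then 1 else 0, ?_⟩, ?_, ?_⟩
      · intro h
        have := congrFun h i0
        simp [hi0] at this
      · simp only [Set.mem_compl_iff, W0, Set.mem_setOf_eq, not_exists, not_and, not_not]
        intro j hj
        by_cases hjS : j ∈ S <;> simp [hjS] at hj ⊢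
      · ext j
        by_cases hjS : j ∈ S <;> simp [Function.support, hjS]
  have hinj := supp_injOn (W0_resolves (n := n) h3F)
  have hcompl : (W0 F n)ᶜ.ncard = 2 ^ n - 1 := by
    rw [← card_ne_empty_sets, ← him, Set.ncard_image_of_injOn hinj]
  have hsum : (W0 F n).ncard + (W0 F n)ᶜ.ncard = Nat.card V := Set.ncard_add_ncard_compl _
  rw [card_V q hq, hcompl] at hsum
  have h2n : 1 ≤ 2 ^ n := Nat.one_le_two_pow
  have hqn : 2 ^ n ≤ q ^ n := Nat.pow_le_pow_left (by omega) n
  omega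

end Aux

lemma arith_sum (q n : ℕ) (h3 : 3 ≤ q) :
    ∑ k ∈ Finset.Icc 1 n, n.choose k * ((q - 1) ^ k - 1) = q ^ n - 2 ^ n := by
  have hqn : (2:ℕ) ^ n ≤ q ^ n := Nat.pow_le_pow_left (by omega) n
  have hins : Finset.range (n + 1) = insert 0 (Finset.Icc 1 n) := by
    ext x; simp [Finset.mem_range, Finset.mem_Icc]; omega
  have h0notin : (0 : ℕ) ∉ Finset.Icc 1 n := by simp
  apply Nat.cast_inj (R := ℤ) |>.mp
  have e1 : ∑ k ∈ Finset.Icc 1 n, ((q:ℤ) - 1) ^ k * (n.choose k : ℤ) = (q:ℤ) ^ n - 1 := by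
    have hb := (Commute.all ((q:ℤ) - 1) 1).add_pow n
    simp only [sub_add_cancel, one_pow, mul_one] at hb
    rw [hins, Finset.sum_insert h0notin] at hb
    simp only [pow_zero, Nat.choose_zero_right, Nat.cast_one, one_mul] at hb
    linarith
  have e2 : ∑ k ∈ Finset.Icc 1 n, (n.choose k : ℤ) = 2 ^ n - 1 := by
    have hb := Nat.sum_range_choose n
    rw [hins, Finset.sum_insert h0notin] at hb
    have : ((∑ k ∈ Finset.Icc 1 n, n.choose k : ℕ) : ℤ) = ((2 ^ n - 1 : ℕ) : ℤ) := by
      congr 1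
      simp only [Nat.choose_zero_right] at hb
      omega
    rw [Nat.cast_sum] at this
    rw [this, Nat.cast_sub Nat.one_le_two_pow]
    push_cast
    ring
  have lhs_eq : ((∑ k ∈ Finset.Icc 1 n, n.choose k * ((q - 1) ^ k - 1) : ℕ) : ℤ)
      = ∑ k ∈ Finset.Icc 1 n, (((q:ℤ) - 1) ^ k * (n.choose k : ℤ) - (n.choose k : ℤ)) := by
    rw [Nat.cast_sum]
    apply Finset.sum_congr rfl
    intro k _
    have h1 : 1 ≤ (q - 1) ^ k := Nat.one_le_pow _ _ (by omega)
    rw [Nat.cast_mul, Nat.cast_sub h1, Nat.cast_pow, Nat.cast_sub (show 1 ≤ q by omega),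
      Nat.cast_one]
    ring
  rw [lhs_eq, Finset.sum_sub_distrib, e1, e2, Nat.cast_sub hqn]
  push_cast
  ring

theorem stmt9 (q n : ℕ) (F : Type*) [Field F] [Fintype F] (hq : Fintype.card F = q)
    (h3 : 3 ≤ q) :
    metricDim (NZCGraph F n) = ∑ k ∈ Finset.Icc 1 n, n.choose k * ((q - 1) ^ k - 1) := by
  have h3F : 3 ≤ Fintype.card F := hq ▸ h3
  have hmem : q ^ n - 2 ^ n ∈
      {k | ∃ W : Set {v : Fin n → F // v ≠ 0}, W.ncard = k ∧ Resolves (NZCGraph F n) W} :=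
    ⟨W0 F n, card_W0 q hq h3, W0_resolves h3F⟩
  have hle : metricDim (NZCGraph F n) ≤ q ^ n - 2 ^ n := Nat.sInf_le hmem
  have hge : q ^ n - 2 ^ n ≤ metricDim (NZCGraph F n) := by
    apply le_csInf ⟨_, hmem⟩
    rintro k ⟨W, rfl, hW⟩
    exact lower_bound q hq h3 hW
  rw [arith_sum q n h3]
  omega
end

section
/- If q ≥ 3, then every minimum resolving set of the non-zero component graph Γ(V) contains a basis of the vector space V. -/
section aux
variable {F : Type*} [Field F] {n : ℕ}

lemma nzc_dist_two {u v : {v : Fin n → F // v ≠ 0}} (hne : u ≠ v)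
    (h2 : ¬ ∃ i, (u : Fin n → F) i ≠ 0 ∧ (v : Fin n → F) i ≠ 0) :
    (NZCGraph F n).dist u v = 2 := by
  obtain ⟨i, hi⟩ := Function.ne_iff.1 u.2
  obtain ⟨j, hj⟩ := Function.ne_iff.1 v.2
  simp only [Pi.zero_apply] at hi hj
  have hvi : (v : Fin n → F) i = 0 := by
    by_contra hv; exact h2 ⟨i, hi, hv⟩
  have huj : (u : Fin n → F) j = 0 := by
    by_contra hu; exact h2 ⟨j, hu, hj⟩
  have hz : (u : Fin n → F) + (v : Fin n → F) ≠ 0 := fun h => by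
    have := congrFun h i; simp [hvi] at this; exact hi this
  set z : {v : Fin n → F // v ≠ 0} := ⟨(u : Fin n → F) + v, hz⟩ with hzdef
  have hzj : (z : Fin n → F) j = (v : Fin n → F) j := by simp [hzdef, huj]
  have hzi : (z : Fin n → F) i = (u : Fin n → F) i := by simp [hzdef, hvi]
  have ha1 : (NZCGraph F n).Adj u z := by
    refine ⟨fun h => ?_, i, hi, hzi ▸ hi⟩
    have := congrFun (congrArg Subtype.val h) j
    rw [hzj] at this; exact hj (huj ▸ this.symm)
  have ha2 : (NZCGraph F n).Adj z v := by
    refine ⟨fun h => ?_, j, hzj ▸ hj, hj⟩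
    have := congrFun (congrArg Subtype.val h) i
    rw [hzi] at this; exact hi (hvi ▸ this)
  have hle : (NZCGraph F n).dist u v ≤ 2 :=
    SimpleGraph.dist_le (SimpleGraph.Walk.cons ha1 (SimpleGraph.Walk.cons ha2 SimpleGraph.Walk.nil))
  have hr : (NZCGraph F n).Reachable u v :=
    ⟨SimpleGraph.Walk.cons ha1 (SimpleGraph.Walk.cons ha2 SimpleGraph.Walk.nil)⟩
  have h0 : (NZCGraph F n).dist u v ≠ 0 := fun h => hne (hr.dist_eq_zero_iff.1 h)
  have h1 : (NZCGraph F n).dist u v ≠ 1 := fun h =>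
    h2 (SimpleGraph.dist_eq_one_iff_adj.1 h).2
  omega

lemma nzc_adj {u v : {v : Fin n → F // v ≠ 0}} (hne : u ≠ v)
    (h : ∃ i, (u : Fin n → F) i ≠ 0 ∧ (v : Fin n → F) i ≠ 0) :
    (NZCGraph F n).Adj u v := ⟨hne, h⟩

lemma nzc_dist_eq {u v w : {v : Fin n → F // v ≠ 0}}
    (hsupp : ∀ i, (u : Fin n → F) i ≠ 0 ↔ (v : Fin n → F) i ≠ 0)
    (hwu : w ≠ u) (hwv : w ≠ v) :
    (NZCGraph F n).dist u w = (NZCGraph F n).dist v w := by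
  by_cases h : ∃ i, (u : Fin n → F) i ≠ 0 ∧ (w : Fin n → F) i ≠ 0
  · obtain ⟨i, hui, hwi⟩ := h
    rw [SimpleGraph.dist_eq_one_iff_adj.2 (nzc_adj hwu.symm ⟨i, hui, hwi⟩),
      SimpleGraph.dist_eq_one_iff_adj.2 (nzc_adj hwv.symm ⟨i, (hsupp i).1 hui, hwi⟩)]
  · have h' : ¬ ∃ i, (v : Fin n → F) i ≠ 0 ∧ (w : Fin n → F) i ≠ 0 := fun ⟨i, hvi, hwi⟩ =>
      h ⟨i, (hsupp i).2 hvi, hwi⟩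
    rw [nzc_dist_two hwu.symm h, nzc_dist_two hwv.symm h']

end aux

theorem stmt11 (q n : ℕ) (F : Type*) [Field F] [Fintype F] (hq : Fintype.card F = q)
    (h3 : 3 ≤ q) (W : Set {v : Fin n → F // v ≠ 0})
    (hW : Resolves (NZCGraph F n) W)
    (hcard : W.ncard = metricDim (NZCGraph F n)) :
    ∃ B ⊆ Subtype.val '' W, Submodule.span F B = ⊤ ∧
      LinearIndependent F (fun x : B => (x : Fin n → F)) := by
  classical
  -- two distinct nonzero scalars
  obtain ⟨a, ha0, ha1⟩ : ∃ a : F, a ≠ 0 ∧ a ≠ 1 := by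
    by_contra h
    push_neg at h
    have hsub : (Finset.univ : Finset F) ⊆ {0, 1} := fun x _ => by
      rcases eq_or_ne x 0 with rfl | hx
      · simp
      · simp [h x hx]
    have := Finset.card_le_card hsub
    rw [Finset.card_univ, hq] at this
    have h2 : ({0, 1} : Finset F).card ≤ 2 :=
      (Finset.card_insert_le _ _).trans (by simp)
    omega
  have single_ne : ∀ (i : Fin n) (d : F), d ≠ 0 → (Pi.single i d : Fin n → F) ≠ 0 := by
    intro i d hd h
    have := congrFun h i
    simp [Pi.single_eq_same] at this
    exact hd this
  -- for each i, some nonzero multiple of e_i lies in W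
  have key : ∀ i : Fin n, ∃ w ∈ W, ∃ d : F, d ≠ 0 ∧ (w : Fin n → F) = Pi.single i d := by
    intro i
    by_contra hcon
    push_neg at hcon
    set u : {v : Fin n → F // v ≠ 0} := ⟨Pi.single i (1 : F), single_ne i 1 one_ne_zero⟩
    set v : {v : Fin n → F // v ≠ 0} := ⟨Pi.single i a, single_ne i a ha0⟩
    have huv : u ≠ v := fun h => by
      have := congrFun (congrArg Subtype.val h) i
      simp [u, v, Pi.single_eq_same] at this
      exact ha1 this.symm
    have hsupp : ∀ j, (u : Fin n → F) j ≠ 0 ↔ (v : Fin n → F) j ≠ 0 := by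
      intro j
      rcases eq_or_ne j i with rfl | hj
      · simp [u, v, Pi.single_eq_same, ha0]
      · simp [u, v, Pi.single_eq_of_ne hj]
    have huW : u ∉ W := fun h => hcon u h 1 one_ne_zero rfl
    have hvW : v ∉ W := fun h => hcon v h a ha0 rfl
    refine huv (hW u v fun w hw => nzc_dist_eq hsupp (fun h => huW (h ▸ hw))
      (fun h => hvW (h ▸ hw)))
  choose w hwW d hd0 hwd using key
  -- basis of scaled standard vectors
  let b : Module.Basis (Fin n) F (Fin n → F) :=
    (Pi.basisFun F (Fin n)).unitsSMul (fun i => Units.mk0 (d i) (hd0 i))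
  have hb : ∀ i, b i = (w i : Fin n → F) := by
    intro i
    rw [Module.Basis.unitsSMul_apply, hwd i]
    simp only [Pi.basisFun_apply, Units.smul_mk0, Units.smul_def, Units.val_mk0]
    ext j
    rcases eq_or_ne j i with rfl | hj
    · simp [Pi.single_eq_same]
    · simp [Pi.single_eq_of_ne hj]
  refine ⟨Set.range ⇑b, ?_, b.span_eq, b.linearIndependent.linearIndepOn_id⟩
  rintro x ⟨i, rfl⟩
  exact ⟨w i, hwW i, (hb i).symm⟩
end

section
/- For q = 2 and n ≥ 3, the exchange property for minimal resolving sets does not hold in the non-zero component graph Γ(V). -/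
set_option synthInstance.maxSize 100000
set_option synthInstance.maxHeartbeats 0
set_option maxRecDepth 100000
set_option maxHeartbeats 1000000

namespace NZCaux


abbrev Vtx (n : ℕ) : Type := {v : Fin n → ZMod 2 // v ≠ 0}

def Meets {n : ℕ} (u w : Vtx n) : Prop := ∃ i, u.1 i ≠ 0 ∧ w.1 i ≠ 0

lemma z2ne {x : ZMod 2} : x ≠ 0 ↔ x = 1 := by revert x; decide

lemma z2eq {x y : ZMod 2} (hx : x ≠ 0) (hy : y ≠ 0) : x = y := by revert x y; decide

def sv {n : ℕ} (i : Fin n) : Vtx n :=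
  ⟨fun j => if j = i then 1 else 0, by
    intro h; have := congrFun h i; simp at this⟩

lemma sv_self {n : ℕ} (i : Fin n) : (sv i).1 i = 1 := by simp [sv]

lemma sv_other {n : ℕ} {i j : Fin n} (h : j ≠ i) : (sv i).1 j = 0 := by simp [sv, h]

lemma meets_sv {n : ℕ} (u : Vtx n) (i : Fin n) : Meets u (sv i) ↔ u.1 i ≠ 0 := by
  constructor
  · rintro ⟨j, hj, hsv⟩
    by_cases h : j = i
    · exact h ▸ hj
    · rw [sv_other h] at hsv; exact absurd rfl hsv
  · intro h; exact ⟨i, h, by rw [sv_self]; exact one_ne_zero⟩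

lemma exists_nz {n : ℕ} (u : Vtx n) : ∃ i, u.1 i ≠ 0 := by
  by_contra h
  push_neg at h
  exact u.2 (funext fun i => h i)

def ones (n : ℕ) (hn : 3 ≤ n) : Vtx n :=
  ⟨fun _ => 1, by
    intro h; have := congrFun h ⟨0, by omega⟩; simp at this⟩

lemma reach_ones {n : ℕ} (hn : 3 ≤ n) (u : Vtx n) :
    (NZCGraph (ZMod 2) n).Reachable u (ones n hn) := by
  by_cases h : u = ones n hn
  · rw [h]
  · refine SimpleGraph.Adj.reachable ?_
    obtain ⟨i, hi⟩ := exists_nz u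
    exact ⟨h, i, hi, one_ne_zero⟩

lemma reach {n : ℕ} (hn : 3 ≤ n) (u v : Vtx n) :
    (NZCGraph (ZMod 2) n).Reachable u v :=
  (reach_ones hn u).trans (reach_ones hn v).symm

lemma dist_meets {n : ℕ} {u v : Vtx n} (h1 : u ≠ v) (h2 : Meets u v) :
    (NZCGraph (ZMod 2) n).dist u v = 1 :=
  SimpleGraph.dist_eq_one_iff_adj.mpr ⟨h1, h2⟩

lemma dist_not {n : ℕ} (hn : 3 ≤ n) {u v : Vtx n} (h1 : u ≠ v) (h2 : ¬ Meets u v) :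
    (NZCGraph (ZMod 2) n).dist u v = 2 := by
  have hu1 : u ≠ ones n hn := by
    rintro rfl
    obtain ⟨i, hi⟩ := exists_nz v
    exact h2 ⟨i, one_ne_zero, hi⟩
  have hv1 : v ≠ ones n hn := by
    rintro rfl
    obtain ⟨i, hi⟩ := exists_nz u
    exact h2 ⟨i, hi, one_ne_zero⟩
  have a1 : (NZCGraph (ZMod 2) n).Adj u (ones n hn) := by
    obtain ⟨i, hi⟩ := exists_nz u
    exact ⟨hu1, i, hi, one_ne_zero⟩
  have a2 : (NZCGraph (ZMod 2) n).Adj (ones n hn) v := by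
    obtain ⟨i, hi⟩ := exists_nz v
    exact ⟨fun h => hv1 h.symm, i, one_ne_zero, hi⟩
  have hle : (NZCGraph (ZMod 2) n).dist u v ≤ 2 := by
    have := SimpleGraph.dist_le (SimpleGraph.Walk.cons a1 (SimpleGraph.Walk.cons a2 SimpleGraph.Walk.nil))
    simpa using this
  have h0 : (NZCGraph (ZMod 2) n).dist u v ≠ 0 := fun h =>
    h1 ((reach hn u v).dist_eq_zero_iff.mp h)
  have hne1 : (NZCGraph (ZMod 2) n).dist u v ≠ 1 := fun h =>
    h2 (SimpleGraph.dist_eq_one_iff_adj.mp h).2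
  omega

lemma dist_iff {n : ℕ} (hn : 3 ≤ n) {u v w : Vtx n} (hu : u ≠ w) (hv : v ≠ w) :
    (NZCGraph (ZMod 2) n).dist u w = (NZCGraph (ZMod 2) n).dist v w ↔
      (Meets u w ↔ Meets v w) := by
  by_cases h1 : Meets u w <;> by_cases h2 : Meets v w
  · simp [dist_meets hu h1, dist_meets hv h2, h1, h2]
  · simp [dist_meets hu h1, dist_not hn hv h2, h1, h2]
  · simp [dist_not hn hu h1, dist_meets hv h2, h1, h2]
  · simp [dist_not hn hu h1, dist_not hn hv h2, h1, h2]

lemma key {n : ℕ} (hn : 3 ≤ n) {W : Set (Vtx n)} :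
    Resolves (NZCGraph (ZMod 2) n) W ↔
      ∀ u v : Vtx n, u ∉ W → v ∉ W →
        (∀ w ∈ W, (Meets u w ↔ Meets v w)) → u = v := by
  constructor
  · intro hres u v hu hv hm
    apply hres
    intro w hw
    have hu' : u ≠ w := fun h => hu (h ▸ hw)
    have hv' : v ≠ w := fun h => hv (h ▸ hw)
    rw [dist_iff hn hu' hv']
    exact hm w hw
  · intro hR u v hd
    by_cases huv : u = v
    · exact huv
    by_cases hu : u ∈ W
    · have h0 := hd u hu
      rw [SimpleGraph.dist_self] at h0
      exact ((reach hn v u).dist_eq_zero_iff.mp h0.symm).symm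
    by_cases hv : v ∈ W
    · have h0 := hd v hv
      rw [SimpleGraph.dist_self] at h0
      exact (reach hn u v).dist_eq_zero_iff.mp h0
    refine hR u v hu hv fun w hw => ?_
    have hu' : u ≠ w := fun h => hu (h ▸ hw)
    have hv' : v ≠ w := fun h => hv (h ▸ hw)
    exact (dist_iff hn hu' hv').mp (hd w hw)

lemma not_resolves_of {n : ℕ} (hn : 3 ≤ n) {W : Set (Vtx n)} (u v : Vtx n)
    (hu : u ∉ W) (hv : v ∉ W) (hne : u ≠ v)
    (hm : ∀ w ∈ W, (Meets u w ↔ Meets v w)) :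
    ¬ Resolves (NZCGraph (ZMod 2) n) W :=
  fun h => hne ((key hn).mp h u v hu hv hm)

lemma resolves_mono {α : Type*} {G : SimpleGraph α} {W W' : Set α}
    (h : W ⊆ W') (hres : Resolves G W) : Resolves G W' :=
  fun u v hd => hres u v fun w hw => hd w (h hw)

lemma minimal_of {α : Type*} {G : SimpleGraph α} {W : Set α}
    (h1 : Resolves G W) (h2 : ∀ x ∈ W, ¬ Resolves G (W \ {x})) :
    MinimalResolves G W := by
  refine ⟨h1, fun W' hss hres => ?_⟩
  obtain ⟨x, hxW, hx'⟩ := Set.exists_of_ssubset hss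
  refine h2 x hxW (resolves_mono ?_ hres)
  intro y hy
  exact ⟨hss.subset hy, fun he => hx' (Set.mem_singleton_iff.mp he ▸ hy)⟩

lemma not_minimal_of_subset {α : Type*} {G : SimpleGraph α} {W : Set α} (W' : Set α)
    (hss : W' ⊂ W) (h : Resolves G W') : ¬ MinimalResolves G W :=
  fun hm => hm.2 W' hss h


lemma z01 : (0 : ZMod 2) ≠ 1 := by decide

lemma z2iff {x y : ZMod 2} (h : x ≠ 0 ↔ y ≠ 0) : x = y := by revert x y; decide

def Bset (n : ℕ) : Set (Vtx n) := Set.range sv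

lemma resolves_B {n : ℕ} (hn : 3 ≤ n) : Resolves (NZCGraph (ZMod 2) n) (Bset n) := by
  rw [key hn]
  intro u v hu hv hm
  apply Subtype.ext; funext i
  have h := hm (sv i) ⟨i, rfl⟩
  rw [meets_sv, meets_sv] at h
  exact z2iff h

lemma not_resolves_B_rm {n : ℕ} (hn : 3 ≤ n) (j : Fin n) :
    ¬ Resolves (NZCGraph (ZMod 2) n) (Bset n \ {sv j}) := by
  have hex : ∃ a b : Fin n, a ≠ b ∧ a ≠ j ∧ b ≠ j := by
    refine ⟨if j = ⟨0, by omega⟩ then ⟨1, by omega⟩ else ⟨0, by omega⟩,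
      if j = ⟨2, by omega⟩ then ⟨1, by omega⟩ else ⟨2, by omega⟩, ?_, ?_, ?_⟩ <;>
      split_ifs <;> simp_all [Fin.ext_iff] <;> omega
  obtain ⟨a, b, hab, haj, hbj⟩ := hex
  refine not_resolves_of hn
    ⟨fun i => if i = a ∨ i = b then 1 else 0, ?_⟩
    ⟨fun i => if i = a ∨ i = b ∨ i = j then 1 else 0, ?_⟩ ?_ ?_ ?_ ?_
  · intro h; have := congrFun h a; simp at this
  · intro h; have := congrFun h a; simp at this
  · rintro ⟨⟨m, hm⟩, -⟩
    have h1 := congrFun (congrArg Subtype.val hm) a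
    have h2 := congrFun (congrArg Subtype.val hm) b
    simp [sv] at h1 h2
    exact hab (h1.trans h2.symm)
  · rintro ⟨⟨m, hm⟩, -⟩
    have h1 := congrFun (congrArg Subtype.val hm) a
    have h2 := congrFun (congrArg Subtype.val hm) b
    simp [sv] at h1 h2
    exact hab (h1.trans h2.symm)
  · intro h
    have := congrFun (congrArg Subtype.val h) j
    simp [Ne.symm haj, Ne.symm hbj] at this
  · rintro w ⟨⟨m, rfl⟩, hm2⟩
    have hmj : m ≠ j := fun e => hm2 (by simp [e])
    rw [meets_sv, meets_sv]
    by_cases hma : m = a ∨ m = b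
    · simp only [hma, if_true]
      have : m = a ∨ m = b ∨ m = j := by tauto
      simp only [this, if_true]
    · have h2 : ¬ (m = a ∨ m = b ∨ m = j) := by tauto
      simp only [hma, h2, if_false]

lemma minimal_B {n : ℕ} (hn : 3 ≤ n) :
    MinimalResolves (NZCGraph (ZMod 2) n) (Bset n) := by
  refine minimal_of (resolves_B hn) ?_
  rintro x ⟨j, rfl⟩
  exact not_resolves_B_rm hn j

def Hset (n : ℕ) (hn : 3 ≤ n) : Set (Vtx n) := {v | v.1 ⟨0, by omega⟩ = 0}

lemma resolves_H {n : ℕ} (hn : 3 ≤ n) :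
    Resolves (NZCGraph (ZMod 2) n) (Hset n hn) := by
  rw [key hn]
  intro u v hu hv hm
  apply Subtype.ext; funext i
  by_cases hi : i = ⟨0, by omega⟩
  · subst hi
    exact z2eq hu hv
  · have hmem : sv i ∈ Hset n hn := sv_other (fun e => hi e.symm)
    have h := hm (sv i) hmem
    rw [meets_sv, meets_sv] at h
    exact z2iff h

lemma minimal_H {n : ℕ} (hn : 3 ≤ n) :
    MinimalResolves (NZCGraph (ZMod 2) n) (Hset n hn) := by
  refine minimal_of (resolves_H hn) ?_
  intro x hx
  have hx0 : x.1 ⟨0, by omega⟩ = 0 := hx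
  refine not_resolves_of hn x ⟨fun i => if i = ⟨0, by omega⟩ then 1 else x.1 i, ?_⟩ ?_ ?_ ?_ ?_
  · intro h; have := congrFun h ⟨0, by omega⟩; simp at this
  · simp
  · intro hmem
    have : (if (⟨0, by omega⟩ : Fin n) = ⟨0, by omega⟩ then (1 : ZMod 2) else x.1 ⟨0, by omega⟩) = 0 := hmem.1
    simp at this
  · intro h
    have := congrFun (congrArg Subtype.val h) ⟨0, by omega⟩
    simp [hx0] at this
  · rintro w ⟨hwH, -⟩
    have hw0 : w.1 ⟨0, by omega⟩ = 0 := hwH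
    constructor
    · rintro ⟨i, hxi, hwi⟩
      have hi0 : i ≠ ⟨0, by omega⟩ := fun e => hxi (e ▸ hx0)
      exact ⟨i, by simp [hi0]; exact hxi, hwi⟩
    · rintro ⟨i, hyi, hwi⟩
      by_cases e : i = ⟨0, by omega⟩
      · exact absurd (e ▸ hwi) (fun hh => hh hw0)
      · refine ⟨i, ?_, hwi⟩
        simpa [e] using hyi



lemma swap_singleton {n : ℕ} (hn : 3 ≤ n) (j : Fin n) (hj : j ≠ ⟨0, by omega⟩) :
    ¬ Resolves (NZCGraph (ZMod 2) n)
      (insert (sv ⟨0, by omega⟩) (Hset n hn \ {sv j})) := by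
  have hi0j : (⟨0, by omega⟩ : Fin n) ≠ j := Ne.symm hj
  refine not_resolves_of hn (ones n hn) ⟨fun i => if i = j then 0 else 1, ?_⟩ ?_ ?_ ?_ ?_
  · intro h; have := congrFun h ⟨0, by omega⟩; simp [hi0j] at this
  · rintro (h | ⟨hH, -⟩)
    · have := congrFun (congrArg Subtype.val h) ⟨1, by omega⟩
      have h10 : (⟨1, by omega⟩ : Fin n) ≠ ⟨0, by omega⟩ := by simp [Fin.ext_iff]
      rw [sv_other h10] at this
      simp [ones] at this
    · have : (ones n hn).1 ⟨0, by omega⟩ = 0 := hH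
      simp [ones] at this
  · rintro (h | ⟨hH, -⟩)
    · have hex : ∃ k : Fin n, k ≠ j ∧ k ≠ ⟨0, by omega⟩ := by
        by_cases h1 : j = ⟨1, by omega⟩
        · refine ⟨⟨2, by omega⟩, ?_, by simp [Fin.ext_iff]⟩
          rw [h1]; simp [Fin.ext_iff]
        · exact ⟨⟨1, by omega⟩, fun e => h1 e.symm, by simp [Fin.ext_iff]⟩
      obtain ⟨k, hkj, hk0⟩ := hex
      have := congrFun (congrArg Subtype.val h) k
      rw [sv_other hk0] at this
      simp [hkj] at this
    · have h0 : (if (⟨0, by omega⟩ : Fin n) = j then (0 : ZMod 2) else 1) = 0 := hH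
      simp [hi0j] at h0
  · intro h
    have := congrFun (congrArg Subtype.val h) j
    simp [ones] at this
  · rintro w (rfl | ⟨hwH, hwne⟩)
    · rw [meets_sv, meets_sv]
      constructor <;> intro
      · simp [hi0j]
      · simp [ones]
    · have hw0 : w.1 ⟨0, by omega⟩ = 0 := hwH
      have hwj : w ≠ sv j := fun e => hwne (by simp [e])
      constructor
      · intro _
        by_contra hc
        have hcl : ∀ i : Fin n, i ≠ j → w.1 i = 0 := by
          intro i hij
          by_contra hwz
          refine hc ⟨i, ?_, hwz⟩
          simp [hij]
        apply hwj
        apply Subtype.ext; funext i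
        by_cases hij : i = j
        · subst hij
          by_cases hz : w.1 i = 0
          · exfalso
            apply w.2
            funext k
            by_cases hkj : k = i
            · exact hkj ▸ hz
            · exact hcl k hkj
          · rw [sv_self, z2ne.mp hz]
        · rw [hcl i hij, sv_other hij]
      · intro _
        obtain ⟨i, hi⟩ := exists_nz w
        exact ⟨i, one_ne_zero, hi⟩

lemma swap_big {n : ℕ} (hn : 3 ≤ n) (hn4 : 4 ≤ n) {s : Vtx n}
    (hsH : s ∈ Hset n hn) (hsing : ∀ j, s ≠ sv j) :
    ¬ MinimalResolves (NZCGraph (ZMod 2) n)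
      (insert (sv ⟨0, by omega⟩) (Hset n hn \ {s})) := by
  set i1 : Fin n := ⟨1, by omega⟩ with hi1
  set i2 : Fin n := ⟨2, by omega⟩ with hi2
  set i3 : Fin n := ⟨3, by omega⟩ with hi3
  set d12 : Vtx n := ⟨fun i => if i = i1 ∨ i = i2 then 1 else 0, by
    intro h; have := congrFun h i1; simp at this⟩ with hd12
  set d13 : Vtx n := ⟨fun i => if i = i1 ∨ i = i3 then 1 else 0, by
    intro h; have := congrFun h i1; simp at this⟩ with hd13
  set x : Vtx n := if s = d12 then d13 else d12 with hx
  have hxH : x ∈ Hset n hn := by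
    have c2 : (⟨0, by omega⟩ : Fin n) ≠ i1 := by simp [hi1, Fin.ext_iff]
    have c3 : (⟨0, by omega⟩ : Fin n) ≠ i2 := by simp [hi2, Fin.ext_iff]
    have c4 : (⟨0, by omega⟩ : Fin n) ≠ i3 := by simp [hi3, Fin.ext_iff]
    rw [hx]
    split_ifs <;> show (_ : Vtx n).1 _ = 0 <;> simp [hd12, hd13, c2, c3, c4]
  have hxs : x ≠ s := by
    rw [hx]
    split_ifs with h
    · intro e
      rw [← e] at h
      have := congrFun (congrArg Subtype.val h) i2
      have e23 : i2 ≠ i3 := by simp [hi2, hi3, Fin.ext_iff]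
      have e21 : i2 ≠ i1 := by simp [hi2, hi1, Fin.ext_iff]
      simp [hd12, hd13, e23, e21] at this
    · exact fun e => h e.symm
  have hxsv : ∀ j, x ≠ sv j := by
    intro j e
    have e12 : i1 ≠ i2 := by simp [hi1, hi2, Fin.ext_iff]
    have e13 : i1 ≠ i3 := by simp [hi1, hi3, Fin.ext_iff]
    rw [hx] at e
    have key2 : ∀ (k l : Fin n), k ≠ l → ∀ (hnz : _),
        (⟨fun i => if i = k ∨ i = l then 1 else 0, hnz⟩ : Vtx n) ≠ sv j := by
      intro k l hkl hnz e'
      have h1 : (sv j).1 k = if k = k ∨ k = l then 1 else 0 :=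
        congrFun (congrArg Subtype.val e'.symm) k
      have h2 : (sv j).1 l = if l = k ∨ l = l then 1 else 0 :=
        congrFun (congrArg Subtype.val e'.symm) l
      rw [if_pos (Or.inl rfl)] at h1
      rw [if_pos (Or.inr rfl)] at h2
      have hk : k = j := by
        by_contra hc
        rw [sv_other hc] at h1
        exact z01 h1
      have hl : l = j := by
        by_contra hc
        rw [sv_other hc] at h2
        exact z01 h2
      exact hkl (hk.trans hl.symm)
    revert e
    split_ifs
    · exact key2 i1 i3 e13 _
    · exact key2 i1 i2 e12 _
  intro hmin
  apply hmin.2 ((insert (sv ⟨0, by omega⟩) (Hset n hn \ {s})) \ {x})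
  · rw [Set.ssubset_def]
    constructor
    · exact Set.diff_subset
    · intro hsub
      have hxmem : x ∈ insert (sv ⟨0, by omega⟩) (Hset n hn \ {s}) :=
        Set.mem_insert_of_mem _ ⟨hxH, fun e => hxs e⟩
      exact (hsub hxmem).2 rfl
  · rw [key hn]
    intro u v _ _ hm
    apply Subtype.ext; funext i
    by_cases hi : i = ⟨0, by omega⟩
    · subst hi
      have hmem : sv (⟨0, by omega⟩ : Fin n) ∈
          (insert (sv ⟨0, by omega⟩) (Hset n hn \ {s})) \ {x} := by
        refine ⟨Set.mem_insert _ _, ?_⟩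
        intro e
        exact hxsv ⟨0, by omega⟩ (Set.mem_singleton_iff.mp e).symm
      have h := hm _ hmem
      rw [meets_sv, meets_sv] at h
      exact z2iff h
    · have hmem : sv i ∈ (insert (sv ⟨0, by omega⟩) (Hset n hn \ {s})) \ {x} := by
        refine ⟨Set.mem_insert_of_mem _ ⟨?_, ?_⟩, ?_⟩
        · exact sv_other (fun e => hi e.symm)
        · exact fun e => hsing i (Set.mem_singleton_iff.mp e).symm
        · exact fun e => hxsv i (Set.mem_singleton_iff.mp e).symm
      have h := hm _ hmem
      rw [meets_sv, meets_sv] at h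
      exact z2iff h

instance {n : ℕ} (u w : Vtx n) : Decidable (Meets u w) := by
  unfold Meets; infer_instance

lemma main4 {n : ℕ} (hn : 3 ≤ n) (hn4 : 4 ≤ n) :
    ¬ ExchangeProperty (NZCGraph (ZMod 2) n) := by
  intro hEx
  have hr : sv (⟨0, by omega⟩ : Fin n) ∈ Bset n := ⟨_, rfl⟩
  obtain ⟨s, hs, hmin⟩ := hEx (Bset n) (Hset n hn) (minimal_B hn) (minimal_H hn) _ hr
  by_cases hsing : ∃ j, s = sv j
  · obtain ⟨j, rfl⟩ := hsing
    have hj : j ≠ ⟨0, by omega⟩ := by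
      intro e
      have h0 : (sv j).1 ⟨0, by omega⟩ = 0 := hs
      rw [← e, sv_self] at h0
      exact one_ne_zero h0
    exact swap_singleton hn j hj hmin.1
  · push_neg at hsing
    exact swap_big hn hn4 hs hsing hmin

-- n = 3 concrete vertices
def E0 : Vtx 3 := ⟨![1,0,0], by decide⟩
def E1 : Vtx 3 := ⟨![0,1,0], by decide⟩
def E2 : Vtx 3 := ⟨![0,0,1], by decide⟩
def A12 : Vtx 3 := ⟨![1,1,0], by decide⟩
def A13 : Vtx 3 := ⟨![1,0,1], by decide⟩
def A23 : Vtx 3 := ⟨![0,1,1], by decide⟩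
def JJ : Vtx 3 := ⟨![1,1,1], by decide⟩

def W2 : Set (Vtx 3) := {E1, A12, A13, JJ}

lemma h33 : (3:ℕ) ≤ 3 := le_refl 3

lemma decW2 : ∀ x y : Fin 3 → ZMod 2, x ≠ 0 → y ≠ 0 →
    x ≠ ![0,1,0] → x ≠ ![1,1,0] → x ≠ ![1,0,1] → x ≠ ![1,1,1] →
    y ≠ ![0,1,0] → y ≠ ![1,1,0] → y ≠ ![1,0,1] → y ≠ ![1,1,1] →
    ((∃ i, x i ≠ 0 ∧ (![0,1,0] : Fin 3 → ZMod 2) i ≠ 0) ↔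
      (∃ i, y i ≠ 0 ∧ (![0,1,0] : Fin 3 → ZMod 2) i ≠ 0)) →
    ((∃ i, x i ≠ 0 ∧ (![1,1,0] : Fin 3 → ZMod 2) i ≠ 0) ↔
      (∃ i, y i ≠ 0 ∧ (![1,1,0] : Fin 3 → ZMod 2) i ≠ 0)) →
    ((∃ i, x i ≠ 0 ∧ (![1,0,1] : Fin 3 → ZMod 2) i ≠ 0) ↔
      (∃ i, y i ≠ 0 ∧ (![1,0,1] : Fin 3 → ZMod 2) i ≠ 0)) →
    ((∃ i, x i ≠ 0 ∧ (![1,1,1] : Fin 3 → ZMod 2) i ≠ 0) ↔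
      (∃ i, y i ≠ 0 ∧ (![1,1,1] : Fin 3 → ZMod 2) i ≠ 0)) →
    x = y := by decide

lemma resW2 : Resolves (NZCGraph (ZMod 2) 3) W2 := by
  rw [key h33]
  intro u v hu hv hm
  simp only [W2, Set.mem_insert_iff, Set.mem_singleton_iff, not_or] at hu hv
  obtain ⟨hu1, hu2, hu3, hu4⟩ := hu
  obtain ⟨hv1, hv2, hv3, hv4⟩ := hv
  apply Subtype.ext
  exact decW2 u.1 v.1 u.2 v.2
    (fun h => hu1 (Subtype.ext h)) (fun h => hu2 (Subtype.ext h))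
    (fun h => hu3 (Subtype.ext h)) (fun h => hu4 (Subtype.ext h))
    (fun h => hv1 (Subtype.ext h)) (fun h => hv2 (Subtype.ext h))
    (fun h => hv3 (Subtype.ext h)) (fun h => hv4 (Subtype.ext h))
    (hm E1 (by simp [W2])) (hm A12 (by simp [W2]))
    (hm A13 (by simp [W2])) (hm JJ (by simp [W2]))


def R1s : Set (Vtx 3) := {E0, A12, A13}
def R2s : Set (Vtx 3) := {E0, E1, JJ}

lemma decR1 : ∀ x y : Fin 3 → ZMod 2, x ≠ 0 → y ≠ 0 →
    x ≠ ![1,0,0] → x ≠ ![1,1,0] → x ≠ ![1,0,1] →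
    y ≠ ![1,0,0] → y ≠ ![1,1,0] → y ≠ ![1,0,1] →
    ((∃ i, x i ≠ 0 ∧ (![1,0,0] : Fin 3 → ZMod 2) i ≠ 0) ↔
      (∃ i, y i ≠ 0 ∧ (![1,0,0] : Fin 3 → ZMod 2) i ≠ 0)) →
    ((∃ i, x i ≠ 0 ∧ (![1,1,0] : Fin 3 → ZMod 2) i ≠ 0) ↔
      (∃ i, y i ≠ 0 ∧ (![1,1,0] : Fin 3 → ZMod 2) i ≠ 0)) →
    ((∃ i, x i ≠ 0 ∧ (![1,0,1] : Fin 3 → ZMod 2) i ≠ 0) ↔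
      (∃ i, y i ≠ 0 ∧ (![1,0,1] : Fin 3 → ZMod 2) i ≠ 0)) →
    x = y := by decide

lemma decR2 : ∀ x y : Fin 3 → ZMod 2, x ≠ 0 → y ≠ 0 →
    x ≠ ![1,0,0] → x ≠ ![0,1,0] → x ≠ ![1,1,1] →
    y ≠ ![1,0,0] → y ≠ ![0,1,0] → y ≠ ![1,1,1] →
    ((∃ i, x i ≠ 0 ∧ (![1,0,0] : Fin 3 → ZMod 2) i ≠ 0) ↔
      (∃ i, y i ≠ 0 ∧ (![1,0,0] : Fin 3 → ZMod 2) i ≠ 0)) →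
    ((∃ i, x i ≠ 0 ∧ (![0,1,0] : Fin 3 → ZMod 2) i ≠ 0) ↔
      (∃ i, y i ≠ 0 ∧ (![0,1,0] : Fin 3 → ZMod 2) i ≠ 0)) →
    ((∃ i, x i ≠ 0 ∧ (![1,1,1] : Fin 3 → ZMod 2) i ≠ 0) ↔
      (∃ i, y i ≠ 0 ∧ (![1,1,1] : Fin 3 → ZMod 2) i ≠ 0)) →
    x = y := by decide

lemma resR1 : Resolves (NZCGraph (ZMod 2) 3) R1s := by
  rw [key h33]
  intro u v hu hv hm
  simp only [R1s, Set.mem_insert_iff, Set.mem_singleton_iff, not_or] at hu hv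
  obtain ⟨hu1, hu2, hu3⟩ := hu
  obtain ⟨hv1, hv2, hv3⟩ := hv
  apply Subtype.ext
  exact decR1 u.1 v.1 u.2 v.2
    (fun h => hu1 (Subtype.ext h)) (fun h => hu2 (Subtype.ext h))
    (fun h => hu3 (Subtype.ext h))
    (fun h => hv1 (Subtype.ext h)) (fun h => hv2 (Subtype.ext h))
    (fun h => hv3 (Subtype.ext h))
    (hm E0 (by simp [R1s])) (hm A12 (by simp [R1s])) (hm A13 (by simp [R1s]))

lemma resR2 : Resolves (NZCGraph (ZMod 2) 3) R2s := by
  rw [key h33]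
  intro u v hu hv hm
  simp only [R2s, Set.mem_insert_iff, Set.mem_singleton_iff, not_or] at hu hv
  obtain ⟨hu1, hu2, hu3⟩ := hu
  obtain ⟨hv1, hv2, hv3⟩ := hv
  apply Subtype.ext
  exact decR2 u.1 v.1 u.2 v.2
    (fun h => hu1 (Subtype.ext h)) (fun h => hu2 (Subtype.ext h))
    (fun h => hu3 (Subtype.ext h))
    (fun h => hv1 (Subtype.ext h)) (fun h => hv2 (Subtype.ext h))
    (fun h => hv3 (Subtype.ext h))
    (hm E0 (by simp [R2s])) (hm E1 (by simp [R2s])) (hm JJ (by simp [R2s]))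

lemma minW2 : MinimalResolves (NZCGraph (ZMod 2) 3) W2 := by
  refine minimal_of resW2 ?_
  intro x hx
  simp only [W2, Set.mem_insert_iff, Set.mem_singleton_iff] at hx
  rcases hx with rfl | rfl | rfl | rfl
  · refine not_resolves_of h33 A23 E0 ?_ ?_ (by decide) ?_
    · simp only [W2, Set.mem_diff, Set.mem_insert_iff, Set.mem_singleton_iff]; decide
    · simp only [W2, Set.mem_diff, Set.mem_insert_iff, Set.mem_singleton_iff]; decide
    · intro w hw
      obtain ⟨h1, h2⟩ := hw
      simp only [W2, Set.mem_insert_iff, Set.mem_singleton_iff] at h1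
      simp only [Set.mem_singleton_iff] at h2
      rcases h1 with rfl | rfl | rfl | rfl
      · exact absurd rfl h2
      · decide
      · decide
      · decide
  · refine not_resolves_of h33 E2 E0 ?_ ?_ (by decide) ?_
    · simp only [W2, Set.mem_diff, Set.mem_insert_iff, Set.mem_singleton_iff]; decide
    · simp only [W2, Set.mem_diff, Set.mem_insert_iff, Set.mem_singleton_iff]; decide
    · intro w hw
      obtain ⟨h1, h2⟩ := hw
      simp only [W2, Set.mem_insert_iff, Set.mem_singleton_iff] at h1
      simp only [Set.mem_singleton_iff] at h2
      rcases h1 with rfl | rfl | rfl | rfl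
      · decide
      · exact absurd rfl h2
      · decide
      · decide
  · refine not_resolves_of h33 A13 E0 ?_ ?_ (by decide) ?_
    · simp only [W2, Set.mem_diff, Set.mem_insert_iff, Set.mem_singleton_iff]; decide
    · simp only [W2, Set.mem_diff, Set.mem_insert_iff, Set.mem_singleton_iff]; decide
    · intro w hw
      obtain ⟨h1, h2⟩ := hw
      simp only [W2, Set.mem_insert_iff, Set.mem_singleton_iff] at h1
      simp only [Set.mem_singleton_iff] at h2
      rcases h1 with rfl | rfl | rfl | rfl
      · decide
      · decide
      · exact absurd rfl h2
      · decide
  · refine not_resolves_of h33 JJ A23 ?_ ?_ (by decide) ?_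
    · simp only [W2, Set.mem_diff, Set.mem_insert_iff, Set.mem_singleton_iff]; decide
    · simp only [W2, Set.mem_diff, Set.mem_insert_iff, Set.mem_singleton_iff]; decide
    · intro w hw
      obtain ⟨h1, h2⟩ := hw
      simp only [W2, Set.mem_insert_iff, Set.mem_singleton_iff] at h1
      simp only [Set.mem_singleton_iff] at h2
      rcases h1 with rfl | rfl | rfl | rfl
      · decide
      · decide
      · decide
      · exact absurd rfl h2

lemma notminswap1 : ¬ MinimalResolves (NZCGraph (ZMod 2) 3) (insert E0 (W2 \ {E1})) := by
  refine not_minimal_of_subset R1s ?_ resR1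
  rw [Set.ssubset_def]
  constructor
  · intro z hz
    simp only [R1s, Set.mem_insert_iff, Set.mem_singleton_iff] at hz
    rcases hz with rfl | rfl | rfl
    · exact Set.mem_insert _ _
    · exact Set.mem_insert_of_mem _ (by
        simp only [W2, Set.mem_diff, Set.mem_insert_iff, Set.mem_singleton_iff]; decide)
    · exact Set.mem_insert_of_mem _ (by
        simp only [W2, Set.mem_diff, Set.mem_insert_iff, Set.mem_singleton_iff]; decide)
  · intro hsub
    have hJ : JJ ∈ insert E0 (W2 \ {E1}) := Set.mem_insert_of_mem _ (by
      simp only [W2, Set.mem_diff, Set.mem_insert_iff, Set.mem_singleton_iff]; decide)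
    have := hsub hJ
    simp only [R1s, Set.mem_insert_iff, Set.mem_singleton_iff] at this
    revert this; decide

lemma notminswap2 : ¬ MinimalResolves (NZCGraph (ZMod 2) 3) (insert E0 (W2 \ {A12})) := by
  refine not_minimal_of_subset R2s ?_ resR2
  rw [Set.ssubset_def]
  constructor
  · intro z hz
    simp only [R2s, Set.mem_insert_iff, Set.mem_singleton_iff] at hz
    rcases hz with rfl | rfl | rfl
    · exact Set.mem_insert _ _
    · exact Set.mem_insert_of_mem _ (by
        simp only [W2, Set.mem_diff, Set.mem_insert_iff, Set.mem_singleton_iff]; decide)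
    · exact Set.mem_insert_of_mem _ (by
        simp only [W2, Set.mem_diff, Set.mem_insert_iff, Set.mem_singleton_iff]; decide)
  · intro hsub
    have hA : A13 ∈ insert E0 (W2 \ {A12}) := Set.mem_insert_of_mem _ (by
      simp only [W2, Set.mem_diff, Set.mem_insert_iff, Set.mem_singleton_iff]; decide)
    have := hsub hA
    simp only [R2s, Set.mem_insert_iff, Set.mem_singleton_iff] at this
    revert this; decide

lemma notminswap3 : ¬ MinimalResolves (NZCGraph (ZMod 2) 3) (insert E0 (W2 \ {A13})) := by
  refine not_minimal_of_subset R2s ?_ resR2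
  rw [Set.ssubset_def]
  constructor
  · intro z hz
    simp only [R2s, Set.mem_insert_iff, Set.mem_singleton_iff] at hz
    rcases hz with rfl | rfl | rfl
    · exact Set.mem_insert _ _
    · exact Set.mem_insert_of_mem _ (by
        simp only [W2, Set.mem_diff, Set.mem_insert_iff, Set.mem_singleton_iff]; decide)
    · exact Set.mem_insert_of_mem _ (by
        simp only [W2, Set.mem_diff, Set.mem_insert_iff, Set.mem_singleton_iff]; decide)
  · intro hsub
    have hA : A12 ∈ insert E0 (W2 \ {A13}) := Set.mem_insert_of_mem _ (by
      simp only [W2, Set.mem_diff, Set.mem_insert_iff, Set.mem_singleton_iff]; decide)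
    have := hsub hA
    simp only [R2s, Set.mem_insert_iff, Set.mem_singleton_iff] at this
    revert this; decide

lemma notminswap4 : ¬ MinimalResolves (NZCGraph (ZMod 2) 3) (insert E0 (W2 \ {JJ})) := by
  refine not_minimal_of_subset R1s ?_ resR1
  rw [Set.ssubset_def]
  constructor
  · intro z hz
    simp only [R1s, Set.mem_insert_iff, Set.mem_singleton_iff] at hz
    rcases hz with rfl | rfl | rfl
    · exact Set.mem_insert _ _
    · exact Set.mem_insert_of_mem _ (by
        simp only [W2, Set.mem_diff, Set.mem_insert_iff, Set.mem_singleton_iff]; decide)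
    · exact Set.mem_insert_of_mem _ (by
        simp only [W2, Set.mem_diff, Set.mem_insert_iff, Set.mem_singleton_iff]; decide)
  · intro hsub
    have hE : E1 ∈ insert E0 (W2 \ {JJ}) := Set.mem_insert_of_mem _ (by
      simp only [W2, Set.mem_diff, Set.mem_insert_iff, Set.mem_singleton_iff]; decide)
    have := hsub hE
    simp only [R1s, Set.mem_insert_iff, Set.mem_singleton_iff] at this
    revert this; decide

lemma main3 : ¬ ExchangeProperty (NZCGraph (ZMod 2) 3) := by
  intro hEx
  have hE0B : E0 ∈ Bset 3 := ⟨⟨0, by omega⟩, by decide⟩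
  obtain ⟨s, hs, hmin⟩ := hEx (Bset 3) W2 (minimal_B h33) minW2 E0 hE0B
  simp only [W2, Set.mem_insert_iff, Set.mem_singleton_iff] at hs
  rcases hs with rfl | rfl | rfl | rfl
  · exact notminswap1 hmin
  · exact notminswap2 hmin
  · exact notminswap3 hmin
  · exact notminswap4 hmin

end NZCaux

theorem stmt15 (n : ℕ) (hn : 3 ≤ n) : ¬ ExchangeProperty (NZCGraph (ZMod 2) n) := by
  rcases Nat.lt_or_ge n 4 with h4 | h4
  · have h3 : n = 3 := by omega
    subst h3
    exact NZCaux.main3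
  · exact NZCaux.main4 hn h4
end
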